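/- Concatenation with an initial self-avoiding prefix: let π be a walk from a to b and v a vertex on LE(π). Then π admits a unique decomposition π = π'(v) · π''(v) into a walk π'(v) from a to v and a walk π''(v) from v to b such that (a) the last edge of π'(v) belongs to LE(π'(v)) (or π'(v) is trivial when v = a), and (b) π''(v) visits no vertex of LE(π'(v)) except v. -/

import Mathlib

variable {V : Type*} [DecidableEq V]

/-- Loop erasure of a walk, recorded as its vertex sequence: keep the first
vertex, jump past its last occurrence, and continue.  This produces the same
self-avoiding walk as repeatedly erasing the first loop. -/
def loopErase : List V → List V
  | [] => []
  | a :: l => a :: loopErase ((l.reverse.takeWhile (· ≠ a)).reverse)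
termination_by l => l.length
decreasing_by
  simp only [List.length_reverse, List.length_cons]
  exact Nat.lt_succ_of_le ((List.Sublist.length_le (List.takeWhile_sublist _)).trans (by simp))

lemma LE17aux_le_nil : loopErase ([] : List V) = [] := by rw [loopErase]

lemma LE17aux_le_cons (a : V) (l : List V) :
    loopErase (a :: l) = a :: loopErase ((l.reverse.takeWhile (· ≠ a)).reverse) := by
  rw [loopErase]

lemma LE17aux_le_single (a : V) : loopErase [a] = [a] := by
  rw [LE17aux_le_cons]; simp [LE17aux_le_nil]

lemma LE17aux_tw_app {p : V → Bool} {xs ys : List V} (h : ∀ x ∈ xs, p x) :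
    (xs ++ ys).takeWhile p = xs ++ ys.takeWhile p := by
  induction xs with
  | nil => rfl
  | cons x xs ih =>
    simp [List.takeWhile_cons, h x (by simp), ih fun y hy => h y (by simp [hy])]

lemma LE17aux_suffix_eq {a : V} {w q : List V} (hw : w = [] ∨ w.getLast? = some a) (hq : a ∉ q) :
    (((w ++ q).reverse).takeWhile (· ≠ a)).reverse = q := by
  have h1 : ∀ x ∈ q.reverse, (decide (x ≠ a)) = true := by
    intro x hx
    simp only [decide_eq_true_eq]
    rintro rfl; exact hq (List.mem_reverse.1 hx)
  have h2 : (w.reverse).takeWhile (fun x => decide (x ≠ a)) = [] := by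
    rcases hw with rfl | hw
    · rfl
    · obtain ⟨t, rfl⟩ := List.getLast?_eq_some_iff.1 hw
      simp [List.takeWhile_cons]
  rw [List.reverse_append, LE17aux_tw_app h1, h2]
  simp

lemma LE17aux_le_key {a : V} {w q : List V} (hw : w = [] ∨ w.getLast? = some a) (hq : a ∉ q) :
    loopErase (a :: (w ++ q)) = a :: loopErase q := by
  rw [LE17aux_le_cons, LE17aux_suffix_eq hw hq]

lemma LE17aux_not_mem_suffix (a : V) (l : List V) : a ∉ (l.reverse.takeWhile (· ≠ a)).reverse := by
  intro h
  have := List.mem_takeWhile_imp (List.mem_reverse.1 h)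
  simp at this

lemma LE17aux_le_subset : ∀ (n : ℕ) (l : List V), l.length ≤ n → ∀ u ∈ loopErase l, u ∈ l := by
  intro n
  induction n with
  | zero =>
    intro l hl u hu
    rw [List.length_eq_zero_iff.1 (Nat.le_zero.1 hl)] at hu ⊢
    simpa [LE17aux_le_nil] using hu
  | succ n ih =>
    intro l hl u hu
    match l with
    | [] => simpa [LE17aux_le_nil] using hu
    | a :: l' =>
      rw [LE17aux_le_cons] at hu
      rcases List.mem_cons.1 hu with h | h
      · simp [h]
      · have hlen : ((l'.reverse.takeWhile (· ≠ a)).reverse).length ≤ n := by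
          have := (List.takeWhile_sublist (l := l'.reverse) (· ≠ a)).length_le
          simp only [List.length_reverse] at this ⊢
          exact le_trans this (Nat.le_of_succ_le_succ (by simpa using hl))
        have := ih _ hlen u h
        have : u ∈ l' := by
          have := (List.takeWhile_sublist (l := l'.reverse) (· ≠ a)).subset
            (List.mem_reverse.1 this)
          exact List.mem_reverse.1 this
        simp [this]

lemma LE17aux_a_not_mem_le (a : V) (l : List V) :
    a ∉ loopErase ((l.reverse.takeWhile (· ≠ a)).reverse) := fun h =>
  LE17aux_not_mem_suffix a l (LE17aux_le_subset _ _ le_rfl a h)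

lemma LE17aux_head_dropWhile {p : V → Bool} : ∀ (l : List V) (x : V) (t : List V),
    l.dropWhile p = x :: t → p x = false := by
  intro l
  induction l with
  | nil => intro x t h; simp at h
  | cons y l ih =>
    intro x t h
    rw [List.dropWhile_cons] at h
    by_cases hy : p y
    · rw [if_pos hy] at h; exact ih _ _ h
    · rw [if_neg hy] at h
      cases h
      simpa using hy

lemma LE17aux_main : ∀ (n : ℕ) (l : List V), l.length ≤ n → ∀ v ∈ loopErase l,
    ∃! p : List V × List V,
      l = p.1 ++ p.2 ∧ p.1.getLast? = some v ∧
      (p.1 = [v] ∨ loopErase p.1 = loopErase p.1.dropLast ++ [v]) ∧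
      (∀ u ∈ v :: p.2, u ∈ loopErase p.1 → u = v) := by
  intro n
  induction n with
  | zero =>
    intro l hl v hv
    rw [List.length_eq_zero_iff.1 (Nat.le_zero.1 hl)] at hv
    simp [LE17aux_le_nil] at hv
  | succ n ih =>
    intro l hl v hv
    match l with
    | [] => simp [LE17aux_le_nil] at hv
    | a :: l' =>
      set s := (l'.reverse.takeWhile (· ≠ a)).reverse with hs
      set w := (l'.reverse.dropWhile (· ≠ a)).reverse with hwdef
      have hsplit : l' = w ++ s := by
        conv_lhs => rw [← List.reverse_reverse l',
          ← List.takeWhile_append_dropWhile (p := (· ≠ a)) (l := l'.reverse)]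
        rw [List.reverse_append]
      have has : a ∉ s := LE17aux_not_mem_suffix a l'
      have hw : w = [] ∨ w.getLast? = some a := by
        rcases hd : l'.reverse.dropWhile (· ≠ a) with _ | ⟨x, t⟩
        · left; rw [hwdef, hd]; rfl
        · right
          have hx : x = a := by
            have := LE17aux_head_dropWhile _ _ _ hd
            simpa using this
          subst hx
          rw [hwdef, hd]
          simp
      have hle : loopErase (a :: l') = a :: loopErase s := by
        rw [LE17aux_le_cons, ← hs]
      have hslen : s.length ≤ n := by
        have h1 := (List.takeWhile_sublist (l := l'.reverse) (· ≠ a)).length_le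
        have h2 : l'.length ≤ n := by simpa using Nat.le_of_succ_le_succ hl
        rw [hs]
        simp only [List.length_reverse] at h1 ⊢
        exact le_trans h1 h2
      by_cases hva : v = a
      · subst hva
        refine ⟨([v], l'), ⟨by simp, by simp, Or.inl rfl, ?_⟩, ?_⟩
        · intro u hu hmem
          rw [LE17aux_le_single] at hmem
          simpa using hmem
        · rintro ⟨p1, p2⟩ ⟨heq, hlast, hcond, hb⟩
          dsimp only at heq hlast hcond hb ⊢
          obtain ⟨t1, rfl⟩ := List.getLast?_eq_some_iff.1 hlast
          rcases t1 with _ | ⟨x, t1⟩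
          · simp only [List.nil_append] at heq ⊢
            have : l' = p2 := by simpa using heq
            simp [this]
          · exfalso
            have hx : x = v := by
              have := congrArg List.head? heq
              simpa using this.symm
            subst x
            rcases hcond with h | h
            · simp at h
            · rw [List.cons_append] at h
              have hdl : (v :: (t1 ++ [v])).dropLast = v :: t1 := by
                rw [← List.cons_append, List.dropLast_concat]
              rw [hdl] at h
              have e1 : loopErase (v :: (t1 ++ [v])) = [v] := by
                rw [LE17aux_le_cons]
                have : ((t1 ++ [v]).reverse.takeWhile (· ≠ v)).reverse = ([] : List V) := by
                  rw [List.reverse_append]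
                  simp [List.takeWhile_cons]
                rw [this, LE17aux_le_nil]
              rw [e1, LE17aux_le_cons] at h
              simp at h
      · -- v ≠ a
        have hv' : v ∈ loopErase s := by
          rw [hle] at hv
          rcases List.mem_cons.1 hv with h | h
          · exact absurd h hva
          · exact h
        obtain ⟨q, ⟨hq1, hq2, hq3, hq4⟩, huniq⟩ := ih s hslen v hv'
        have haq1 : a ∉ q.1 := fun h => has (hq1 ▸ List.mem_append_left _ h)
        have haq2 : a ∉ q.2 := fun h => has (hq1 ▸ List.mem_append_right _ h)
        obtain ⟨r, hr⟩ := List.getLast?_eq_some_iff.1 hq2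
        have hq3' : loopErase q.1 = loopErase q.1.dropLast ++ [v] := by
          rcases hq3 with h | h
          · rw [h, LE17aux_le_single]
            simp [LE17aux_le_nil]
          · exact h
        have hq1ne : q.1 ≠ [] := by rw [hr]; simp
        refine ⟨(a :: (w ++ q.1), q.2), ⟨?_, ?_, Or.inr ?_, ?_⟩, ?_⟩
        · simp [hsplit, hq1]
        · show (a :: (w ++ q.1)).getLast? = some v
          rw [hr, ← List.append_assoc, ← List.cons_append]
          exact List.getLast?_concat
        · have e1 : loopErase (a :: (w ++ q.1)) = a :: loopErase q.1 := LE17aux_le_key hw haq1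
          have hdl : (a :: (w ++ q.1)).dropLast = a :: (w ++ q.1.dropLast) := by
            conv_rhs => rw [hr, List.dropLast_concat]
            rw [hr, ← List.append_assoc, ← List.cons_append, List.dropLast_concat]
          have e2 : loopErase (a :: (w ++ q.1.dropLast)) = a :: loopErase q.1.dropLast :=
            LE17aux_le_key hw (fun h => haq1 (List.dropLast_subset _ h))
          rw [e1, hdl, e2, hq3']
          rfl
        · intro u hu hmem
          rw [LE17aux_le_key hw haq1] at hmem
          rcases List.mem_cons.1 hmem with rfl | hmem'
          · rcases List.mem_cons.1 hu with rfl | hu'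
            · rfl
            · exact absurd hu' haq2
          · exact hq4 u hu hmem'
        · rintro ⟨p1, p2⟩ ⟨heq, hlast, hcond, hb⟩
          dsimp only at heq hlast hcond hb ⊢
          obtain ⟨t1, rfl⟩ := List.getLast?_eq_some_iff.1 hlast
          rcases t1 with _ | ⟨x, t1'⟩
          · exfalso
            have : a = v := by simpa using congrArg List.head? heq
            exact hva this.symm
          · have hx : x = a := by simpa using (congrArg List.head? heq).symm
            subst x
            have heq' : l' = (t1' ++ [v]) ++ p2 := by simpa using heq
            have hale : a ∈ loopErase ((a :: t1') ++ [v]) := by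
              rw [List.cons_append, LE17aux_le_cons]
              exact List.mem_cons_self
            have hap2 : a ∉ p2 := by
              intro h
              exact hva ((hb a (List.mem_cons_of_mem _ h) hale).symm)
            have hws : w ++ s = (t1' ++ [v]) ++ p2 := by rw [← hsplit]; exact heq'
            rcases List.append_eq_append_iff.1 hws with ⟨x, hx1, hx2⟩ | ⟨x, hx1, hx2⟩
            · -- t1' ++ [v] = w ++ x, s = x ++ p2
              have hxne : x ≠ [] := by
                rintro rfl
                rw [List.append_nil] at hx1
                rcases hw with h | h
                · rw [h] at hx1; simp at hx1
                · rw [← hx1, List.getLast?_concat] at h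
                  exact hva (Option.some_injective _ h)
              have hxlast : x.getLast? = some v := by
                have := congrArg List.getLast? hx1
                rw [List.getLast?_concat, List.getLast?_append] at this
                rcases hx : x.getLast? with _ | y
                · exact absurd (List.getLast?_eq_none_iff.1 hx) hxne
                · rw [hx] at this; simpa using this.symm
              obtain ⟨x2, rfl⟩ := List.getLast?_eq_some_iff.1 hxlast
              have hax : a ∉ x2 ++ [v] := fun h => has (hx2 ▸ List.mem_append_left _ h)
              have ht1' : t1' = w ++ x2 := by
                apply List.append_cancel_right (bs := [v])
                rw [hx1, List.append_assoc]
              have e1 : loopErase ((a :: t1') ++ [v]) = a :: loopErase (x2 ++ [v]) := by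
                rw [List.cons_append, ht1', List.append_assoc]
                exact LE17aux_le_key hw hax
              have hcond' : loopErase (x2 ++ [v]) = loopErase x2 ++ [v] := by
                rcases hcond with h | h
                · exfalso
                  have : a = v := by simpa using congrArg List.head? h
                  exact hva this.symm
                · rw [List.dropLast_concat] at h
                  rw [e1] at h
                  have hdl2 : (a :: t1') = a :: (w ++ x2) := by rw [ht1']
                  rw [hdl2] at h
                  have e2 : loopErase (a :: (w ++ x2)) = a :: loopErase x2 :=
                    LE17aux_le_key hw (fun hh => hax (List.mem_append_left _ hh))
                  rw [e2] at h
                  exact List.tail_eq_of_cons_eq h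
              have := huniq (x2 ++ [v], p2) ⟨hx2, List.getLast?_concat, Or.inr (by
                  rw [List.dropLast_concat]; exact hcond'), ?_⟩
              · have h1 : x2 ++ [v] = q.1 := congrArg Prod.fst this
                have h2 : p2 = q.2 := congrArg Prod.snd this
                rw [Prod.mk.injEq]
                constructor
                · rw [List.cons_append, ht1', ← h1, List.append_assoc]
                · exact h2
              · intro u hu hmem
                apply hb u hu
                rw [e1]
                exact List.mem_cons_of_mem _ hmem
            · -- w = (t1' ++ [v]) ++ x, p2 = x ++ s
              exfalso
              rcases x.eq_nil_or_concat with rfl | ⟨t, y, rfl⟩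
              · rw [List.append_nil] at hx1
                rcases hw with h | h
                · rw [h] at hx1; simp at hx1
                · rw [hx1, List.getLast?_concat] at h
                  exact hva (Option.some_injective _ h)
              · rcases hw with h | h
                · rw [h] at hx1; simp at hx1
                · rw [hx1] at h
                  rw [List.concat_eq_append, ← List.append_assoc, List.getLast?_concat] at h
                  have hy : y = a := Option.some_injective _ h
                  subst hy
                  apply hap2
                  rw [hx2]
                  exact List.mem_append_left _ (by simp [List.concat_eq_append])

/-- Splitting a walk at a vertex of its loop-erased part: if `v` lies on
`LE(π)`, then `π` decomposes uniquely as `π = π' · π''` with `π'` ending at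
`v`, such that (a) the last edge of `π'` contributes to `LE(π')` (or `π'` is
the trivial walk `[v]`), and (b) `π''` visits no vertex of `LE(π')` other
than `v`.  Here `π'` is recorded as the list `p.1` (ending in `v`) and `π''`
as the walk `v :: p.2`, so that `π` is the list `p.1 ++ p.2`. -/
theorem stmt17 {V : Type*} [DecidableEq V] (Adj : V → V → Prop)
    (l : List V) (hwalk : l.Chain' Adj) (v : V) (hv : v ∈ loopErase l) :
    ∃! p : List V × List V,
      l = p.1 ++ p.2 ∧
      p.1.getLast? = some v ∧
      (p.1 = [v] ∨ loopErase p.1 = loopErase p.1.dropLast ++ [v]) ∧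
      (∀ u ∈ v :: p.2, u ∈ loopErase p.1 → u = v) := by
  exact LE17aux_main l.length l le_rfl v hv
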